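/- Let β₂ ∈ (0,1) and let C ∈ ℕ satisfy 5·β₂^(C−2) ≤ (1−β₂)/(4−β₂). For t ∈ ℕ define V_{Ct} = (1−β₂)·(Σ_{i=1}^{t} β₂^{Ci−1} + 4·Σ_{i=1}^{t} β₂^{Ci−2}) and V_{Ct+1} = β₂·V_{Ct} + (1−β₂). Then V_{Ct+1} − 4·V_{Ct} ≥ 0. -/
import Mathlib


/-- The key inequality `V_{Ct+1} - 4·V_{Ct} ≥ 0` in the non-convergence analysis of
Adam on a `C`-periodic gradient sequence, where
`V_{Ct} = (1-β₂)·(Σ_{i=1}^t β₂^{Ci-1} + 4·Σ_{i=1}^t β₂^{Ci-2})` and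
`V_{Ct+1} = β₂·V_{Ct} + (1-β₂)`. -/
theorem adam_second_moment_key_inequality
    (beta2 : ℝ) (hb0 : 0 < beta2) (hb1 : beta2 < 1)
    (C : ℕ) (hC : 5 * beta2 ^ (C - 2) ≤ (1 - beta2) / (4 - beta2))
    (t : ℕ) :
    0 ≤ (beta2 * ((1 - beta2) *
          ((∑ i ∈ Finset.Icc 1 t, beta2 ^ (C * i - 1)) +
            4 * ∑ i ∈ Finset.Icc 1 t, beta2 ^ (C * i - 2))) + (1 - beta2))
        - 4 * ((1 - beta2) *
          ((∑ i ∈ Finset.Icc 1 t, beta2 ^ (C * i - 1)) +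
            4 * ∑ i ∈ Finset.Icc 1 t, beta2 ^ (C * i - 2))) := by
  have hb4 : (0:ℝ) < 4 - beta2 := by linarith
  have hb1' : (0:ℝ) < 1 - beta2 := by linarith
  have hC3 : 3 ≤ C := by
    by_contra h
    push_neg at h
    have h0 : C - 2 = 0 := by omega
    rw [h0, pow_zero, mul_one] at hC
    have : (1 - beta2) / (4 - beta2) < 1 := by
      rw [div_lt_one hb4]; linarith
    linarith
  set S1 := ∑ i ∈ Finset.Icc 1 t, beta2 ^ (C * i - 1) with hS1
  set S2 := ∑ i ∈ Finset.Icc 1 t, beta2 ^ (C * i - 2) with hS2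
  have hbC : beta2 ^ C < 1 := pow_lt_one₀ hb0.le hb1 (by omega)
  have hbC0 : (0:ℝ) < 1 - beta2 ^ C := by linarith
  have hbCb : beta2 ^ C ≤ beta2 := by
    calc beta2 ^ C ≤ beta2 ^ 1 := pow_le_pow_of_le_one hb0.le hb1.le (by omega)
    _ = beta2 := pow_one _
  -- S1 ≤ S2 termwise
  have h12 : S1 ≤ S2 := by
    apply Finset.sum_le_sum
    intro i hi
    simp only [Finset.mem_Icc] at hi
    apply pow_le_pow_of_le_one hb0.le hb1.le
    omega
  -- rewrite S2 as geometric
  have hS2' : S2 = beta2 ^ (C - 2) * ∑ j ∈ Finset.range t, (beta2 ^ C) ^ j := by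
    rw [hS2, ← Finset.Ico_add_one_right_eq_Icc, Finset.sum_Ico_eq_sum_range, Finset.mul_sum]
    apply Finset.sum_congr rfl
    intro j _
    rw [← pow_mul, ← pow_add]
    congr 1
    have : C * (1 + j) - 2 = (C - 2) + C * j := by
      cases C with
      | zero => omega
      | succ n => ring_nf; omega
    omega
  have hGnn : (0:ℝ) ≤ ∑ j ∈ Finset.range t, (beta2 ^ C) ^ j := by
    apply Finset.sum_nonneg; intro i _; positivity
  have hG1 : (1 - beta2 ^ C) * ∑ j ∈ Finset.range t, (beta2 ^ C) ^ j ≤ 1 := by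
    have h := geom_sum_mul (beta2 ^ C) t
    have h1 : (0:ℝ) ≤ (beta2 ^ C) ^ t := by positivity
    nlinarith
  have hG2 : (1 - beta2) * ∑ j ∈ Finset.range t, (beta2 ^ C) ^ j ≤ 1 := by
    nlinarith
  have hS2nn : (0:ℝ) ≤ S2 := by
    apply Finset.sum_nonneg; intro i _; positivity
  have hS2le : (1 - beta2) * S2 ≤ beta2 ^ (C - 2) := by
    rw [hS2']
    have hpow : (0:ℝ) ≤ beta2 ^ (C - 2) := by positivity
    nlinarith
  -- V ≤ 5 β^{C-2} ≤ (1-β)/(4-β)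
  have hV : (1 - beta2) * (S1 + 4 * S2) ≤ (1 - beta2) / (4 - beta2) := by
    calc (1 - beta2) * (S1 + 4 * S2) ≤ (1 - beta2) * (5 * S2) := by nlinarith
    _ = 5 * ((1 - beta2) * S2) := by ring
    _ ≤ 5 * beta2 ^ (C - 2) := by linarith
    _ ≤ (1 - beta2) / (4 - beta2) := hC
  have hV' : (4 - beta2) * ((1 - beta2) * (S1 + 4 * S2)) ≤ 1 - beta2 := by
    have := mul_le_mul_of_nonneg_left hV hb4.le
    rw [mul_div_cancel₀ _ (ne_of_gt hb4)] at this
    linarith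
  nlinarith [hV']
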